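/- Let f : ℝ → ℝ² be injective and continuous on [0,1] with finite length eVariationOn f (Set.Icc 0 1) = ENNReal.ofReal L, and set C = f '' (Set.Icc 0 1). Then for every ε > 0 there exists δ > 0 such that for every map g : ℝ → ℝ² continuous on [0,1] whose range C' = g '' (Set.Icc 0 1) satisfies Metric.hausdorffDist C C' ≤ δ, one has eVariationOn g (Set.Icc 0 1) ≥ ENNReal.ofReal (L − ε). In other words, any curve sufficiently Hausdorff-close to a simple rectifiable curve C is at least nearly as long as C. (Lower-semicontinuity claim established in the proof of Theorem 2.4.) -/

import Mathlib

local notation "ℝ²" => EuclideanSpace ℝ (Fin 2)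

set_option maxHeartbeats 1000000 in
/-- Lower semicontinuity of length (from the proof of Theorem 2.4): any curve sufficiently
Hausdorff-close to a simple rectifiable curve of length `L` has length at least `L - ε`. -/
theorem stmt_9 (f : ℝ → ℝ²)
    (hfi : Set.InjOn f (Set.Icc 0 1)) (hfc : ContinuousOn f (Set.Icc 0 1))
    (L : ℝ) (hL : eVariationOn f (Set.Icc 0 1) = ENNReal.ofReal L)
    (C : Set ℝ²) (hC : C = f '' Set.Icc 0 1) :
    ∀ ε > (0 : ℝ), ∃ δ > (0 : ℝ), ∀ g : ℝ → ℝ², ContinuousOn g (Set.Icc 0 1) →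
      Metric.hausdorffDist C (g '' Set.Icc 0 1) ≤ δ →
      eVariationOn g (Set.Icc 0 1) ≥ ENNReal.ofReal (L - ε) := by
  classical
  intro ε hε
  by_cases hLε : L ≤ ε
  · refine ⟨1, one_pos, fun g hg hd => ?_⟩
    rw [ENNReal.ofReal_of_nonpos (by linarith)]
    exact zero_le
  push_neg at hLε
  have hL0 : 0 < L := lt_trans hε hLε
  -- Step 1: a partition with chord sum close to L
  have h1 : ENNReal.ofReal (L - ε / 2) < eVariationOn f (Set.Icc 0 1) := by
    rw [hL]
    exact (ENNReal.ofReal_lt_ofReal_iff hL0).mpr (by linarith)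
  rw [eVariationOn] at h1
  obtain ⟨⟨N, u, hu, humem⟩, hNu⟩ := lt_iSup_iff.mp h1
  simp only at hNu
  set S := ∑ i ∈ Finset.range N, dist (f (u (i + 1))) (f (u i)) with hSdef
  have hS0 : 0 ≤ S := Finset.sum_nonneg fun i _ => dist_nonneg
  have hS : L - ε / 2 < S := by
    have hSsum : ∑ i ∈ Finset.range N, edist (f (u (i + 1))) (f (u i)) = ENNReal.ofReal S := by
      rw [hSdef, ENNReal.ofReal_sum_of_nonneg fun i _ => dist_nonneg]
      exact Finset.sum_congr rfl fun i _ => edist_dist _ _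
    rw [hSsum] at hNu
    exact (ENNReal.ofReal_lt_ofReal_iff_of_nonneg (by linarith)).mp hNu
  -- Step 2: uniform continuity of f
  set ε₀ := ε / (8 * ((N : ℝ) + 1)) with hε₀def
  have hε₀ : 0 < ε₀ := by positivity
  obtain ⟨η₁, hη₁, hf1⟩ := Metric.uniformContinuousOn_iff.mp
    (isCompact_Icc.uniformContinuousOn_of_continuous hfc) ε₀ hε₀
  set η := η₁ / 3 with hηdef
  have hη : 0 < η := by positivity
  have hfη : ∀ s ∈ Set.Icc (0:ℝ) 1, ∀ s' ∈ Set.Icc (0:ℝ) 1, |s - s'| ≤ 2 * η →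
      dist (f s) (f s') ≤ ε₀ := by
    intro s hs s' hs' h
    exact le_of_lt (hf1 s hs s' hs' (by rw [Real.dist_eq]; linarith))
  -- Step 3: inverse modulus of continuity from injectivity + compactness
  obtain ⟨d, hd, hinv⟩ : ∃ d, 0 < d ∧ ∀ s ∈ Set.Icc (0:ℝ) 1, ∀ s' ∈ Set.Icc (0:ℝ) 1,
      dist (f s) (f s') ≤ d → |s - s'| ≤ η := by
    by_cases hKne : ((Set.Icc (0:ℝ) 1 ×ˢ Set.Icc (0:ℝ) 1) ∩ {p : ℝ × ℝ | η ≤ |p.1 - p.2|}).Nonempty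
    · have hKc : IsCompact ((Set.Icc (0:ℝ) 1 ×ˢ Set.Icc (0:ℝ) 1) ∩
          {p : ℝ × ℝ | η ≤ |p.1 - p.2|}) :=
        (isCompact_Icc.prod isCompact_Icc).inter_right
          (isClosed_le continuous_const (continuous_fst.sub continuous_snd).abs)
      have hcont : ContinuousOn (fun p : ℝ × ℝ => dist (f p.1) (f p.2))
          ((Set.Icc (0:ℝ) 1 ×ˢ Set.Icc (0:ℝ) 1) ∩ {p : ℝ × ℝ | η ≤ |p.1 - p.2|}) :=
        continuous_dist.comp_continuousOn
          ((hfc.comp continuous_fst.continuousOn fun p (hp : p ∈ (Set.Icc (0:ℝ) 1 ×ˢ Set.Icc (0:ℝ) 1) ∩ {p : ℝ × ℝ | η ≤ |p.1 - p.2|}) => hp.1.1).prodMk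
            (hfc.comp continuous_snd.continuousOn fun p (hp : p ∈ (Set.Icc (0:ℝ) 1 ×ˢ Set.Icc (0:ℝ) 1) ∩ {p : ℝ × ℝ | η ≤ |p.1 - p.2|}) => hp.1.2))
      obtain ⟨z, hzK, hzmin⟩ := hKc.exists_isMinOn hKne hcont
      have hz12 : z.1 ≠ z.2 := by
        intro h
        have h2 := hzK.2
        rw [Set.mem_setOf_eq, h, sub_self, abs_zero] at h2
        linarith
      have hd0 : 0 < dist (f z.1) (f z.2) :=
        dist_pos.mpr fun h => hz12 (hfi hzK.1.1 hzK.1.2 h)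
      refine ⟨dist (f z.1) (f z.2) / 2, by linarith, fun s hs s' hs' hdist => ?_⟩
      by_contra hcon
      push_neg at hcon
      have hm : dist (f z.1) (f z.2) ≤ dist (f s) (f s') :=
        isMinOn_iff.mp hzmin (s, s') ⟨⟨hs, hs'⟩, le_of_lt hcon⟩
      linarith
    · refine ⟨1, one_pos, fun s hs s' hs' _ => ?_⟩
      by_contra hcon
      push_neg at hcon
      exact hKne ⟨(s, s'), ⟨hs, hs'⟩, le_of_lt hcon⟩
  -- Step 4: choose δ
  refine ⟨min (d / 4) ε₀, lt_min (by linarith) hε₀, fun g hgc hgd => ?_⟩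
  set δ := min (d / 4) ε₀ with hδdef
  have hδ : 0 < δ := lt_min (by linarith) hε₀
  have hδd4 : δ ≤ d / 4 := min_le_left _ _
  have hδε₀ : δ ≤ ε₀ := min_le_right _ _
  -- basic facts about C and C'
  have hCc : IsCompact C := hC ▸ isCompact_Icc.image_of_continuousOn hfc
  have hC'c : IsCompact (g '' Set.Icc 0 1) := isCompact_Icc.image_of_continuousOn hgc
  have hCne : C.Nonempty := hC ▸ (Set.nonempty_Icc.mpr zero_le_one).image f
  have hC'ne : (g '' Set.Icc 0 1).Nonempty := (Set.nonempty_Icc.mpr zero_le_one).image g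
  have hfin : EMetric.hausdorffEdist C (g '' Set.Icc 0 1) ≠ ⊤ :=
    Metric.hausdorffEdist_ne_top_of_nonempty_of_bounded hCne hC'ne hCc.isBounded hC'c.isBounded
  have hnear : ∀ x ∈ C, ∃ s ∈ Set.Icc (0:ℝ) 1, dist x (g s) ≤ δ := by
    intro x hx
    have h1 : Metric.infDist x (g '' Set.Icc 0 1) ≤ δ :=
      le_trans (Metric.infDist_le_hausdorffDist_of_mem hx hfin) hgd
    obtain ⟨y, hy, hyd⟩ := hC'c.exists_infDist_eq_dist hC'ne x
    obtain ⟨s, hs, rfl⟩ := hy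
    exact ⟨s, hs, by rw [← hyd]; exact h1⟩
  have hshadow : ∀ s ∈ Set.Icc (0:ℝ) 1, ∃ v ∈ Set.Icc (0:ℝ) 1, dist (g s) (f v) ≤ δ := by
    intro s hs
    have hgs : g s ∈ g '' Set.Icc 0 1 := Set.mem_image_of_mem g hs
    have h1 : Metric.infDist (g s) C ≤ δ := by
      refine le_trans (Metric.infDist_le_hausdorffDist_of_mem hgs ?_) ?_
      · rw [EMetric.hausdorffEdist_comm]; exact hfin
      · rw [Metric.hausdorffDist_comm]; exact hgd
    obtain ⟨y, hy, hyd⟩ := hCc.exists_infDist_eq_dist hCne (g s)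
    rw [hC] at hy
    obtain ⟨v, hv, rfl⟩ := hy
    exact ⟨v, hv, by rw [← hyd]; exact h1⟩
  have hπ' : ∀ s : ℝ, ∃ v : ℝ, s ∈ Set.Icc (0:ℝ) 1 →
      v ∈ Set.Icc (0:ℝ) 1 ∧ dist (g s) (f v) ≤ δ := by
    intro s
    by_cases hs : s ∈ Set.Icc (0:ℝ) 1
    · obtain ⟨v, hv, hvd⟩ := hshadow s hs
      exact ⟨v, fun _ => ⟨hv, hvd⟩⟩
    · exact ⟨0, fun h => absurd h hs⟩
  choose π hπ using hπ'
  -- anchors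
  obtain ⟨a, haI, had⟩ := hnear _ (hC ▸ Set.mem_image_of_mem f (humem 0))
  obtain ⟨b, hbI, hbd⟩ := hnear _ (hC ▸ Set.mem_image_of_mem f (humem N))
  -- uniform continuity of g
  obtain ⟨ρ₁, hρ₁, hg1⟩ := Metric.uniformContinuousOn_iff.mp
    (isCompact_Icc.uniformContinuousOn_of_continuous hgc) (d / 2) (by linarith)
  set ρ := ρ₁ / 2 with hρdef
  have hρ : 0 < ρ := by positivity
  have hgρ : ∀ s ∈ Set.Icc (0:ℝ) 1, ∀ s' ∈ Set.Icc (0:ℝ) 1, |s - s'| ≤ ρ →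
      dist (g s) (g s') ≤ d / 2 := fun s hs s' hs' h =>
    le_of_lt (hg1 s hs s' hs' (by rw [Real.dist_eq]; linarith))
  -- the grid
  set M : ℕ := ⌈1 / ρ⌉₊ + 1 with hMdef
  have hM0 : 0 < M := Nat.succ_pos _
  have hMR : 0 < (M : ℝ) := Nat.cast_pos.mpr hM0
  have hMρ : 1 / (M : ℝ) ≤ ρ := by
    rw [div_le_iff₀ hMR]
    have h1 : 1 / ρ ≤ (M : ℝ) := by
      refine le_trans (Nat.le_ceil _) ?_
      exact_mod_cast Nat.le_succ _
    calc (1:ℝ) = ρ * (1 / ρ) := by field_simp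
      _ ≤ ρ * M := by nlinarith
  set q : ℕ → ℝ := fun k => a + k * (b - a) / M with hqdef
  have hab1 : |b - a| ≤ 1 := by
    rw [abs_le]
    constructor <;> [linarith [haI.2, hbI.1]; linarith [haI.1, hbI.2]]
  have hqmem : ∀ k ≤ M, q k ∈ Set.Icc (0:ℝ) 1 := by
    intro k hk
    have hk' : (k : ℝ) ≤ M := Nat.cast_le.mpr hk
    have hk0 : (0 : ℝ) ≤ k := Nat.cast_nonneg k
    have hrw : q k = (a * M + k * (b - a)) / M := by
      rw [hqdef]; field_simp
    rw [hrw]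
    constructor
    · apply div_nonneg _ hMR.le
      nlinarith [mul_nonneg haI.1 (sub_nonneg.mpr hk'), mul_nonneg hk0 hbI.1]
    · rw [div_le_one hMR]
      nlinarith [mul_nonneg (sub_nonneg.mpr haI.2) (sub_nonneg.mpr hk'),
        mul_nonneg hk0 (sub_nonneg.mpr hbI.2)]
  have hq0 : q 0 = a := by simp [hqdef]
  have hqM : q M = b := by
    rw [hqdef]; field_simp; ring
  have hqstep : ∀ k : ℕ, |q (k + 1) - q k| ≤ ρ := by
    intro k
    have he : q (k + 1) - q k = (b - a) / M := by
      rw [hqdef]; push_cast; ring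
    rw [he, abs_div, abs_of_pos hMR]
    calc |b - a| / (M : ℝ) ≤ 1 / M := by gcongr
      _ ≤ ρ := hMρ
  -- the shadow parameters
  set P : ℕ → ℝ := fun k => π (q k) with hPdef
  have hPmem : ∀ k ≤ M, P k ∈ Set.Icc (0:ℝ) 1 := fun k hk => (hπ (q k) (hqmem k hk)).1
  have hPg : ∀ k ≤ M, dist (g (q k)) (f (P k)) ≤ δ := fun k hk => (hπ (q k) (hqmem k hk)).2
  have hstep : ∀ k, k + 1 ≤ M → |P (k + 1) - P k| ≤ η := by
    intro k hk
    apply hinv _ (hPmem _ hk) _ (hPmem _ (le_trans (Nat.le_succ k) hk))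
    have h1 : dist (f (P (k + 1))) (g (q (k + 1))) ≤ δ := by
      rw [dist_comm]; exact hPg _ hk
    have h2 : dist (g (q (k + 1))) (g (q k)) ≤ d / 2 :=
      hgρ _ (hqmem _ hk) _ (hqmem _ (le_trans (Nat.le_succ k) hk)) (hqstep k)
    have h3 : dist (g (q k)) (f (P k)) ≤ δ := hPg _ (le_trans (Nat.le_succ k) hk)
    calc dist (f (P (k + 1))) (f (P k))
        ≤ dist (f (P (k + 1))) (g (q (k + 1))) + dist (g (q (k + 1))) (g (q k))
            + dist (g (q k)) (f (P k)) := dist_triangle4 _ _ _ _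
      _ ≤ d := by linarith
  have hP0 : |P 0 - u 0| ≤ η := by
    apply hinv _ (hPmem 0 (Nat.zero_le M)) _ (humem 0)
    have h1 : dist (f (P 0)) (g a) ≤ δ := by
      rw [dist_comm, ← hq0]; exact hPg 0 (Nat.zero_le M)
    have h2 : dist (g a) (f (u 0)) ≤ δ := by rw [dist_comm]; exact had
    calc dist (f (P 0)) (f (u 0)) ≤ dist (f (P 0)) (g a) + dist (g a) (f (u 0)) :=
        dist_triangle _ _ _
      _ ≤ d := by linarith
  have hPM : |P M - u N| ≤ η := by
    apply hinv _ (hPmem M le_rfl) _ (humem N)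
    have h1 : dist (f (P M)) (g b) ≤ δ := by
      rw [dist_comm, ← hqM]; exact hPg M le_rfl
    have h2 : dist (g b) (f (u N)) ≤ δ := by rw [dist_comm]; exact hbd
    calc dist (f (P M)) (f (u N)) ≤ dist (f (P M)) (g b) + dist (g b) (f (u N)) :=
        dist_triangle _ _ _
      _ ≤ d := by linarith
  -- extraction of ordered visiting times (discrete intermediate value argument)
  have hwit : ∀ j : ℕ, ∃ k, u (min j N) - η ≤ P k := by
    intro j
    refine ⟨M, ?_⟩
    have h1 : u (min j N) ≤ u N := hu (min_le_right j N)
    linarith [(abs_le.mp hPM).1]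
  have hwit' : ∀ j : ℕ, ∃ k, k ≤ M ∧ (u (min j N) - η ≤ P k) ∧
      ∀ m, m < k → ¬(u (min j N) - η ≤ P m) := by
    intro j
    refine ⟨Nat.find (hwit j), ?_, Nat.find_spec (hwit j), fun m hm => Nat.find_min (hwit j) hm⟩
    apply Nat.find_le
    have h1 : u (min j N) ≤ u N := hu (min_le_right j N)
    linarith [(abs_le.mp hPM).1]
  choose κ hκle hκspec hκmin using hwit'
  have hκmono : Monotone κ := by
    intro i j hij
    by_contra hcon
    push_neg at hcon
    exact hκmin i (κ j) hcon
      (le_trans (sub_le_sub_right (hu (min_le_min hij le_rfl)) η) (hκspec j))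
  have hκval : ∀ j ≤ N, |P (κ j) - u j| ≤ η := by
    intro j hj
    have hju : u (min j N) = u j := by rw [min_eq_left hj]
    have hlow : u j - η ≤ P (κ j) := by linarith [hκspec j, hju.le, hju.ge]
    have hhigh : P (κ j) ≤ u j + η := by
      cases hk : κ j with
      | zero =>
        have h1 := (abs_le.mp hP0).2
        have h2 : u 0 ≤ u j := hu (Nat.zero_le j)
        linarith
      | succ k =>
        have hkM : k + 1 ≤ M := hk ▸ hκle j
        have hmin : ¬(u (min j N) - η ≤ P k) := hκmin j k (by omega)
        push_neg at hmin
        have h1 := (abs_le.mp (hstep k hkM)).2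
        linarith [hη.le, hju.le, hju.ge]
    rw [abs_le]
    constructor <;> linarith
  have hclose : ∀ j ≤ N, dist (g (q (κ j))) (f (u j)) ≤ δ + ε₀ := by
    intro j hj
    have hjM := hκle j
    have h1 : dist (g (q (κ j))) (f (P (κ j))) ≤ δ := hPg _ hjM
    have h2 : dist (f (P (κ j))) (f (u j)) ≤ ε₀ := by
      apply hfη _ (hPmem _ hjM) _ (humem j)
      have h3 := hκval j hj
      rw [abs_le] at h3 ⊢
      constructor <;> [linarith [h3.1]; linarith [h3.2]]
    calc dist (g (q (κ j))) (f (u j))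
        ≤ dist (g (q (κ j))) (f (P (κ j))) + dist (f (P (κ j))) (f (u j)) := dist_triangle _ _ _
      _ ≤ δ + ε₀ := add_le_add h1 h2
  -- the chord sum of g along the visiting times
  have hTS : ∀ j ∈ Finset.range N,
      dist (f (u (j + 1))) (f (u j)) - 2 * (δ + ε₀)
        ≤ dist (g (q (κ (j + 1)))) (g (q (κ j))) := by
    intro j hj
    have hj' : j < N := Finset.mem_range.mp hj
    have ha1 := hclose (j + 1) (by omega)
    have ha2 := hclose j (by omega)
    have htri := dist_triangle4 (f (u (j + 1))) (g (q (κ (j + 1)))) (g (q (κ j))) (f (u j))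
    have e1 : dist (f (u (j + 1))) (g (q (κ (j + 1))))
        = dist (g (q (κ (j + 1)))) (f (u (j + 1))) := dist_comm _ _
    linarith
  have hsumTS : S - (N : ℝ) * (2 * (δ + ε₀))
      ≤ ∑ j ∈ Finset.range N, dist (g (q (κ (j + 1)))) (g (q (κ j))) := by
    have h2 := Finset.sum_le_sum hTS
    rw [Finset.sum_sub_distrib, Finset.sum_const, Finset.card_range, nsmul_eq_mul, ← hSdef] at h2
    exact h2
  have hbudget : (N : ℝ) * (2 * (δ + ε₀)) ≤ ε / 2 := by
    have hN0 : (0 : ℝ) ≤ N := Nat.cast_nonneg N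
    have h4 : (N : ℝ) * (2 * (δ + ε₀)) ≤ (N : ℝ) * (4 * ε₀) := by nlinarith
    have h5 : (N : ℝ) * (4 * ε₀) ≤ ε / 2 := by
      have hden : (0 : ℝ) < 8 * ((N : ℝ) + 1) := by positivity
      rw [hε₀def, show (N : ℝ) * (4 * (ε / (8 * ((N : ℝ) + 1))))
          = 4 * (N : ℝ) * ε / (8 * ((N : ℝ) + 1)) from by ring,
        div_le_div_iff₀ hden (by norm_num : (0:ℝ) < 2)]
      nlinarith [mul_nonneg hN0 hε.le]
    linarith
  have hofT : ENNReal.ofReal (L - ε)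
      ≤ ∑ j ∈ Finset.range N, edist (g (q (κ (j + 1)))) (g (q (κ j))) := by
    have heq : ∑ j ∈ Finset.range N, edist (g (q (κ (j + 1)))) (g (q (κ j)))
        = ENNReal.ofReal (∑ j ∈ Finset.range N, dist (g (q (κ (j + 1)))) (g (q (κ j)))) := by
      rw [ENNReal.ofReal_sum_of_nonneg fun i _ => dist_nonneg]
      exact Finset.sum_congr rfl fun i _ => edist_dist _ _
    rw [heq]
    exact ENNReal.ofReal_le_ofReal (by linarith)
  -- conclude, depending on the direction in which g sweeps the curve
  have hqmem' : ∀ j : ℕ, q (κ j) ∈ Set.Icc (0:ℝ) 1 := fun j => hqmem _ (hκle j)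
  rcases le_total a b with hab | hab
  · have hmono : Monotone (fun j => q (κ j)) := by
      intro i j hij
      have hκ : ((κ i : ℕ) : ℝ) ≤ (κ j : ℕ) := Nat.cast_le.mpr (hκmono hij)
      simp only [hqdef]
      have hba : (0 : ℝ) ≤ b - a := by linarith
      have hmul := mul_le_mul_of_nonneg_right hκ hba
      have h2 : ((κ i : ℕ) : ℝ) * (b - a) / M ≤ ((κ j : ℕ) : ℝ) * (b - a) / M :=
        (div_le_div_iff_of_pos_right hMR).mpr hmul
      linarith
    have hfin2 := eVariationOn.sum_le (f := g) (u := fun j => q (κ j)) (n := N) hmono hqmem'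
    exact le_trans hofT hfin2
  · have hmono : Monotone (fun j => q (κ (N - j))) := by
      intro i j hij
      have h1 : N - j ≤ N - i := Nat.sub_le_sub_left hij N
      have hκ : ((κ (N - j) : ℕ) : ℝ) ≤ (κ (N - i) : ℕ) := Nat.cast_le.mpr (hκmono h1)
      simp only [hqdef]
      have hba : b - a ≤ 0 := by linarith
      have hmul := mul_le_mul_of_nonpos_right hκ hba
      have h2 : ((κ (N - i) : ℕ) : ℝ) * (b - a) / M ≤ ((κ (N - j) : ℕ) : ℝ) * (b - a) / M :=
        (div_le_div_iff_of_pos_right hMR).mpr hmul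
      linarith
    have hsum_eq : ∑ j ∈ Finset.range N, edist (g (q (κ (N - (j + 1))))) (g (q (κ (N - j))))
        = ∑ j ∈ Finset.range N, edist (g (q (κ (j + 1)))) (g (q (κ j))) := by
      rw [← Finset.sum_range_reflect (fun j => edist (g (q (κ (j + 1)))) (g (q (κ j)))) N]
      refine Finset.sum_congr rfl fun j hj => ?_
      have hj' : j < N := Finset.mem_range.mp hj
      rw [show N - (j + 1) = N - 1 - j from by omega, show N - j = (N - 1 - j) + 1 from by omega]
      exact edist_comm _ _
    rw [← hsum_eq] at hofT
    have hfin2 := eVariationOn.sum_le (f := g) (u := fun j => q (κ (N - j))) (n := N) hmono fun j => hqmem' _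
    exact le_trans hofT hfin2
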